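/- arXiv:2112.15572 — 2 statements merged into one kernel-verified Lean document; each statement's English description precedes it below -/
import Mathlib

section
/- The partial sums 1_J(z) := 1/2 − (2/π)·Σ_{j=1}^J sin((2j−1)z)/(2j−1) are uniformly bounded on [−π, π]: there exists a constant M (one may take M = 9/2 + 1/π) such that |1_J(z)| ≤ M for all J ∈ ℕ and all z ∈ [−π, π]. -/
open Real Finset

-- Abel summation identity on Ioc m J
lemma abel_ident (D b : ℕ → ℝ) (m J : ℕ) (hmJ : m ≤ J) :
    ∑ j ∈ Finset.Ioc m J, (D j - D (j-1)) * b j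
      = D J * b (J+1) - D m * b (m+1) + ∑ j ∈ Finset.Ioc m J, D j * (b j - b (j+1)) := by
  induction J, hmJ using Nat.le_induction with
  | base => simp
  | succ J hJ ih =>
      rw [Finset.sum_Ioc_succ_top (by omega), Finset.sum_Ioc_succ_top (by omega), ih]
      simp only [Nat.add_sub_cancel]
      ring

lemma telescope (b : ℕ → ℝ) (m J : ℕ) (hmJ : m ≤ J) :
    ∑ j ∈ Finset.Ioc m J, (b j - b (j+1)) = b (m+1) - b (J+1) := by
  induction J, hmJ using Nat.le_induction with
  | base => simp
  | succ J hJ ih => rw [Finset.sum_Ioc_succ_top (by omega), ih]; ring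

lemma tail_bound (D b : ℕ → ℝ) (C : ℝ) (m J : ℕ) (hmJ : m ≤ J)
    (hC : ∀ j, |D j| ≤ C)
    (hb0 : ∀ j, m ≤ j → 0 ≤ b (j+1))
    (hbm : ∀ j, m < j → b (j+1) ≤ b j) :
    |∑ j ∈ Finset.Ioc m J, (D j - D (j-1)) * b j| ≤ 2 * C * b (m+1) := by
  have hC0 : 0 ≤ C := (abs_nonneg _).trans (hC 0)
  rw [abel_ident D b m J hmJ]
  have h1 : |D J * b (J+1)| ≤ C * b (J+1) := by
    rw [abs_mul, abs_of_nonneg (hb0 J hmJ)]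
    exact mul_le_mul_of_nonneg_right (hC J) (hb0 J hmJ)
  have h2 : |D m * b (m+1)| ≤ C * b (m+1) := by
    rw [abs_mul, abs_of_nonneg (hb0 m le_rfl)]
    exact mul_le_mul_of_nonneg_right (hC m) (hb0 m le_rfl)
  have h3 : |∑ j ∈ Finset.Ioc m J, D j * (b j - b (j+1))|
      ≤ C * (b (m+1) - b (J+1)) := by
    calc |∑ j ∈ Finset.Ioc m J, D j * (b j - b (j+1))|
        ≤ ∑ j ∈ Finset.Ioc m J, |D j * (b j - b (j+1))| := Finset.abs_sum_le_sum_abs _ _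
      _ ≤ ∑ j ∈ Finset.Ioc m J, C * (b j - b (j+1)) := by
          refine Finset.sum_le_sum fun j hj => ?_
          have hj' := Finset.mem_Ioc.1 hj
          have hd : 0 ≤ b j - b (j+1) := sub_nonneg.2 (hbm j hj'.1)
          rw [abs_mul, abs_of_nonneg hd]
          exact mul_le_mul_of_nonneg_right (hC j) hd
      _ = C * (b (m+1) - b (J+1)) := by rw [← Finset.mul_sum, telescope b m J hmJ]
  calc |D J * b (J+1) - D m * b (m+1) + ∑ j ∈ Finset.Ioc m J, D j * (b j - b (j+1))|
      ≤ |D J * b (J+1)| + |D m * b (m+1)| + |∑ j ∈ Finset.Ioc m J, D j * (b j - b (j+1))| := by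
        calc _ ≤ |D J * b (J+1) - D m * b (m+1)| + |∑ j ∈ Finset.Ioc m J, D j * (b j - b (j+1))| :=
              abs_add_le _ _
          _ ≤ _ := by gcongr; exact abs_sub _ _
    _ ≤ C * b (J+1) + C * b (m+1) + C * (b (m+1) - b (J+1)) := by gcongr
    _ = 2 * C * b (m+1) := by ring

lemma small_bound (z : ℝ) (hz0 : 0 < z) (n : ℕ) :
    |∑ j ∈ Finset.Ioc 0 n, Real.sin ((2*(j:ℝ)-1)*z) / (2*(j:ℝ)-1)| ≤ n * z := by
  calc |∑ j ∈ Finset.Ioc 0 n, Real.sin ((2*(j:ℝ)-1)*z) / (2*(j:ℝ)-1)|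
      ≤ ∑ j ∈ Finset.Ioc 0 n, |Real.sin ((2*(j:ℝ)-1)*z) / (2*(j:ℝ)-1)| :=
        Finset.abs_sum_le_sum_abs _ _
    _ ≤ ∑ j ∈ Finset.Ioc 0 n, z := by
        refine Finset.sum_le_sum fun j hj => ?_
        have hj1 : 1 ≤ j := (Finset.mem_Ioc.1 hj).1
        have hj1' : (1:ℝ) ≤ 2*(j:ℝ)-1 := by
          have : (1:ℝ) ≤ (j:ℝ) := by exact_mod_cast hj1
          linarith
        have hpos : (0:ℝ) < 2*(j:ℝ)-1 := by linarith
        rw [abs_div, abs_of_pos hpos, div_le_iff₀ hpos]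
        calc |Real.sin ((2*(j:ℝ)-1)*z)| ≤ |(2*(j:ℝ)-1)*z| := Real.abs_sin_le_abs
          _ = (2*(j:ℝ)-1)*z := abs_of_pos (by positivity)
          _ = z * (2*(j:ℝ)-1) := by ring
    _ = n * z := by rw [Finset.sum_const]; simp [Nat.card_Ioc]

lemma key (z : ℝ) (hz0 : 0 < z) (hz : z ≤ π/2) (J : ℕ) :
    |∑ j ∈ Finset.Icc 1 J, Real.sin ((2*(j:ℝ)-1)*z) / (2*(j:ℝ)-1)| ≤ 2*π + 1/2 := by
  have hpi : (0:ℝ) < π := Real.pi_pos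
  have hzpi : z < π := lt_of_le_of_lt hz (by linarith)
  have hs : 0 < Real.sin z := Real.sin_pos_of_pos_of_lt_pi hz0 hzpi
  have hsl : 2/π * z ≤ Real.sin z := Real.mul_le_sin hz0.le hz
  set m : ℕ := ⌈1/(2*z)⌉₊ with hm
  have hmub : (m:ℝ) < 1/(2*z) + 1 := Nat.ceil_lt_add_one (by positivity)
  have hmlb : 1/(2*z) ≤ (m:ℝ) := Nat.le_ceil _
  have hmz : (m:ℝ) * z ≤ 1/2 + z := by
    have := mul_lt_mul_of_pos_right hmub hz0
    calc (m:ℝ)*z ≤ (1/(2*z)+1)*z := this.le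
      _ = 1/2 + z := by field_simp
  set D : ℕ → ℝ := fun j => (1 - Real.cos (2*(j:ℝ)*z))/(2*Real.sin z) with hD
  set b : ℕ → ℝ := fun j => 1/(2*(j:ℝ)-1) with hb
  have hDle : ∀ j, |D j| ≤ π/(2*z) := by
    intro j
    have hc1 : Real.cos (2*(j:ℝ)*z) ≤ 1 := Real.cos_le_one _
    have hc2 : -1 ≤ Real.cos (2*(j:ℝ)*z) := Real.neg_one_le_cos _
    have hD0 : 0 ≤ D j := by
      apply div_nonneg (by linarith) (by linarith)
    have h2z : 2*z ≤ π * Real.sin z := by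
      have h := mul_le_mul_of_nonneg_left hsl hpi.le
      calc 2*z = π * (2/π * z) := by field_simp
        _ ≤ π * Real.sin z := h
    rw [abs_of_nonneg hD0, hD, div_le_div_iff₀ (by linarith) (by positivity)]
    nlinarith [mul_le_mul_of_nonneg_right (by linarith : 1 - Real.cos (2*(j:ℝ)*z) ≤ 2) (by linarith : (0:ℝ) ≤ 2*z)]
  have hident : ∀ j : ℕ, 1 ≤ j →
      D j - D (j-1) = Real.sin ((2*(j:ℝ)-1)*z) := by
    intro j hj
    obtain ⟨k, rfl⟩ := Nat.exists_eq_add_of_le hj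
    simp only [hD, Nat.add_sub_cancel_left, Nat.cast_add, Nat.cast_one]
    have hcc : Real.cos (2*(k:ℝ)*z) - Real.cos (2*((1:ℝ)+(k:ℝ))*z)
        = 2 * Real.sin ((2*((1:ℝ)+(k:ℝ))-1)*z) * Real.sin z := by
      rw [Real.cos_sub_cos,
        show (2*(k:ℝ)*z + 2*((1:ℝ)+(k:ℝ))*z)/2 = (2*((1:ℝ)+(k:ℝ))-1)*z by ring,
        show (2*(k:ℝ)*z - 2*((1:ℝ)+(k:ℝ))*z)/2 = -z by ring, Real.sin_neg]
      ring
    field_simp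
    rw [mul_comm (2*((1:ℝ)+(k:ℝ))-1) z] at hcc
    linarith
  rw [show Finset.Icc 1 J = Finset.Ioc 0 J from by rw [← Finset.Icc_add_one_left_eq_Ioc]; rfl]
  rcases le_or_gt J m with hJm | hJm
  · calc |∑ j ∈ Finset.Ioc 0 J, Real.sin ((2*(j:ℝ)-1)*z) / (2*(j:ℝ)-1)|
        ≤ J * z := small_bound z hz0 J
      _ ≤ m * z := by
          have : (J:ℝ) ≤ m := by exact_mod_cast hJm
          exact mul_le_mul_of_nonneg_right this hz0.le
      _ ≤ 1/2 + z := hmz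
      _ ≤ 2*π + 1/2 := by linarith
  · have hsplit := Finset.sum_Ioc_consecutive
      (f := fun j : ℕ => Real.sin ((2*(j:ℝ)-1)*z) / (2*(j:ℝ)-1))
      (Nat.zero_le m) hJm.le
    rw [← hsplit]
    have htaileq : ∑ j ∈ Finset.Ioc m J, Real.sin ((2*(j:ℝ)-1)*z) / (2*(j:ℝ)-1)
        = ∑ j ∈ Finset.Ioc m J, (D j - D (j-1)) * b j := by
      refine Finset.sum_congr rfl fun j hj => ?_
      have hj1 : 1 ≤ j := by have := (Finset.mem_Ioc.1 hj).1; omega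
      rw [hident j hj1, hb, div_eq_mul_one_div]
    have hbm1 : b (m+1) ≤ z := by
      have h1 : (1:ℝ)/z ≤ 2*(m:ℝ)+1 := by
        have : (1:ℝ)/z ≤ 2*(m:ℝ) := by
          have := mul_le_mul_of_nonneg_left hmlb (by norm_num : (0:ℝ) ≤ 2)
          calc (1:ℝ)/z = 2*(1/(2*z)) := by field_simp
            _ ≤ 2*(m:ℝ) := this
        linarith
      have hpos : (0:ℝ) < 2*(m:ℝ)+1 := by positivity
      rw [hb]
      push_cast
      rw [show 2*((m:ℝ)+1)-1 = 2*(m:ℝ)+1 by ring]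
      rw [div_le_iff₀ hpos]
      calc (1:ℝ) = (1/z) * z := by field_simp
        _ ≤ (2*(m:ℝ)+1) * z := mul_le_mul_of_nonneg_right h1 hz0.le
        _ = z * (2*(m:ℝ)+1) := by ring
    have htail : |∑ j ∈ Finset.Ioc m J, (D j - D (j-1)) * b j| ≤ π := by
      have := tail_bound D b (π/(2*z)) m J hJm.le hDle
        (fun j hj => by
          rw [hb]; push_cast
          rw [show 2*((j:ℝ)+1)-1 = 2*(j:ℝ)+1 by ring]; positivity)
        (fun j hj => by
          have hj1 : 1 ≤ j := by omega
          have hj1' : (1:ℝ) ≤ (j:ℝ) := by exact_mod_cast hj1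
          rw [hb]
          push_cast
          apply one_div_le_one_div_of_le (by linarith)
          linarith)
      refine this.trans ?_
      have hbm0 : 0 ≤ b (m+1) := by
        rw [hb]; push_cast
        rw [show 2*((m:ℝ)+1)-1 = 2*(m:ℝ)+1 by ring]; positivity
      calc 2 * (π/(2*z)) * b (m+1) ≤ 2 * (π/(2*z)) * z := by
            apply mul_le_mul_of_nonneg_left hbm1 (by positivity)
        _ = π := by field_simp
    calc |∑ j ∈ Finset.Ioc 0 m, Real.sin ((2*(j:ℝ)-1)*z) / (2*(j:ℝ)-1)
            + ∑ j ∈ Finset.Ioc m J, Real.sin ((2*(j:ℝ)-1)*z) / (2*(j:ℝ)-1)|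
        ≤ |∑ j ∈ Finset.Ioc 0 m, Real.sin ((2*(j:ℝ)-1)*z) / (2*(j:ℝ)-1)|
            + |∑ j ∈ Finset.Ioc m J, Real.sin ((2*(j:ℝ)-1)*z) / (2*(j:ℝ)-1)| := abs_add_le _ _
      _ ≤ (m*z) + π := by
          refine add_le_add (small_bound z hz0 m) ?_
          rw [htaileq]; exact htail
      _ ≤ (1/2 + z) + π := by linarith
      _ ≤ 2*π + 1/2 := by linarith

lemma sum_neg (J : ℕ) (z : ℝ) :
    ∑ j ∈ Finset.Icc 1 J, Real.sin ((2*(j:ℝ)-1)*(-z)) / (2*(j:ℝ)-1)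
      = -∑ j ∈ Finset.Icc 1 J, Real.sin ((2*(j:ℝ)-1)*z) / (2*(j:ℝ)-1) := by
  rw [← Finset.sum_neg_distrib]
  exact Finset.sum_congr rfl fun j hj => by rw [mul_neg, Real.sin_neg, neg_div]

lemma sum_pi_sub (J : ℕ) (z : ℝ) :
    ∑ j ∈ Finset.Icc 1 J, Real.sin ((2*(j:ℝ)-1)*(π - z)) / (2*(j:ℝ)-1)
      = ∑ j ∈ Finset.Icc 1 J, Real.sin ((2*(j:ℝ)-1)*z) / (2*(j:ℝ)-1) := by
  refine Finset.sum_congr rfl fun j hj => ?_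
  have hj1 : 1 ≤ j := (Finset.mem_Icc.1 hj).1
  obtain ⟨k, rfl⟩ := Nat.exists_eq_add_of_le hj1
  congr 1
  have : (2*((1+k:ℕ):ℝ)-1)*(π - z) = ((2*k+1:ℕ):ℝ)*π - (2*((1+k:ℕ):ℝ)-1)*z := by
    push_cast; ring
  rw [this, Real.sin_nat_mul_pi_sub]
  have : Odd (2*k+1) := ⟨k, by ring⟩
  simp [this.neg_one_pow]

lemma bnd1 (J : ℕ) (z : ℝ) (h0 : 0 ≤ z) (h1 : z ≤ π/2) :
    |∑ j ∈ Finset.Icc 1 J, Real.sin ((2*(j:ℝ)-1)*z) / (2*(j:ℝ)-1)| ≤ 2*π + 1/2 := by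
  rcases h0.eq_or_lt with h | h
  · subst h
    simp
    linarith [Real.pi_pos]
  · exact key z h h1 J

lemma bnd2 (J : ℕ) (z : ℝ) (h0 : 0 ≤ z) (h1 : z ≤ π) :
    |∑ j ∈ Finset.Icc 1 J, Real.sin ((2*(j:ℝ)-1)*z) / (2*(j:ℝ)-1)| ≤ 2*π + 1/2 := by
  rcases le_or_gt z (π/2) with h | h
  · exact bnd1 J z h0 h
  · have h2 := bnd1 J (π - z) (by linarith) (by linarith)
    have := sum_pi_sub J (π - z)
    rw [show π - (π - z) = z by ring] at this
    rw [this]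
    exact h2

/-- Uniform boundedness of the indicator Fourier partial sums on `[−π, π]`,
with the constant `M = 9/2 + 1/π`. -/
theorem stmt_3 :
    ∃ M : ℝ, M = 9/2 + 1/π ∧
      ∀ (J : ℕ) (z : ℝ), z ∈ Set.Icc (-π) π →
        |1/2 - (2/π) * ∑ j ∈ Finset.Icc 1 J, Real.sin ((2*(j:ℝ)-1)*z) / (2*(j:ℝ)-1)| ≤ M := by
  have hpi : (0:ℝ) < π := Real.pi_pos
  refine ⟨9/2 + 1/π, rfl, fun J z hz => ?_⟩
  obtain ⟨hz1, hz2⟩ := hz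
  have hS : |∑ j ∈ Finset.Icc 1 J, Real.sin ((2*(j:ℝ)-1)*z) / (2*(j:ℝ)-1)| ≤ 2*π + 1/2 := by
    rcases le_or_gt 0 z with h | h
    · exact bnd2 J z h hz2
    · have h2 := bnd2 J (-z) (by linarith) (by linarith)
      rw [← abs_neg, ← sum_neg]
      simpa using h2
  calc |1/2 - (2/π) * ∑ j ∈ Finset.Icc 1 J, Real.sin ((2*(j:ℝ)-1)*z) / (2*(j:ℝ)-1)|
      ≤ |(1:ℝ)/2| + |(2/π) * ∑ j ∈ Finset.Icc 1 J, Real.sin ((2*(j:ℝ)-1)*z) / (2*(j:ℝ)-1)| :=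
        abs_sub _ _
    _ = 1/2 + (2/π) * |∑ j ∈ Finset.Icc 1 J, Real.sin ((2*(j:ℝ)-1)*z) / (2*(j:ℝ)-1)| := by
        rw [abs_mul, abs_of_pos (by positivity : (0:ℝ) < 2/π)]
        norm_num
    _ ≤ 1/2 + (2/π) * (2*π + 1/2) := by gcongr
    _ = 9/2 + 1/π := by field_simp; ring
end

section
/- Strong consistency of sample quantiles: let x₁, x₂, … be i.i.d. on (0,1) with law P absolutely continuous with respect to Lebesgue measure and a.e. positive density, let q_p be the unique point with F(q_p) = p for a fixed p ∈ (0,1), and let q̂_p(n) be any p-th sample quantile of the first n observations (i.e., F̂_n(q̂_p(n)⁻) ≤ p ≤ F̂_n(q̂_p(n))). Then q̂_p(n) → q_p almost surely as n → ∞. -/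
open MeasureTheory ProbabilityTheory Filter

/-- Strong consistency of sample quantiles: for i.i.d. observations on `(0,1)` with an a.e.
positive Lebesgue density, any sequence of `p`-th sample quantiles (in the empirical CDF
sandwich sense) converges almost surely to the unique population `p`-th quantile `q`. -/
theorem stmt_15 {Ω : Type*} [MeasurableSpace Ω] (P : Measure Ω) [IsProbabilityMeasure P]
    (x : ℕ → Ω → ℝ) (hmeas : ∀ i, Measurable (x i))
    (hindep : iIndepFun x P)
    (μ : Measure ℝ) [IsProbabilityMeasure μ] (hid : ∀ i, Measure.map (x i) P = μ)
    (f : ℝ → ℝ) (hf : Measurable f) (hfnn : ∀ t, 0 ≤ f t)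
    (hμ : μ = volume.withDensity fun t => ENNReal.ofReal (f t))
    (hsupp : μ (Set.Ioo (0:ℝ) 1) = 1)
    (hpos : ∀ᵐ t ∂(volume.restrict (Set.Ioo (0:ℝ) 1)), 0 < f t)
    (p : ℝ) (hp : p ∈ Set.Ioo (0:ℝ) 1)
    (q : ℝ) (hq : q ∈ Set.Ioo (0:ℝ) 1) (hqF : (μ (Set.Iic q)).toReal = p)
    (qhat : ℕ → Ω → ℝ)
    (hqhat : ∀ ω, ∀ n : ℕ, 1 ≤ n →
      (∑ i ∈ Finset.range n, if x i ω < qhat n ω then (1:ℝ) else 0) / n ≤ p ∧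
      p ≤ (∑ i ∈ Finset.range n, if x i ω ≤ qhat n ω then (1:ℝ) else 0) / n) :
    ∀ᵐ ω ∂P, Tendsto (fun n => qhat n ω) atTop (nhds q) := by
  set F : ℝ → ℝ := fun c => (μ (Set.Iic c)).toReal with hFdef
  -- Strong law of large numbers for the empirical CDF at a fixed point `c`.
  have slln : ∀ c : ℝ, ∀ᵐ ω ∂P, Tendsto
      (fun n : ℕ => (∑ i ∈ Finset.range n, if x i ω ≤ c then (1:ℝ) else 0) / n)
      atTop (nhds (F c)) := by
    intro c
    set g : ℝ → ℝ := fun t => if t ≤ c then 1 else 0 with hgdef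
    have gmeas : Measurable g :=
      Measurable.ite measurableSet_Iic measurable_const measurable_const
    have hYcomp : ∀ i, (fun ω => if x i ω ≤ c then (1:ℝ) else 0) = g ∘ x i := fun i => rfl
    have hint : Integrable (g ∘ x 0) P := by
      refine (integrable_const (1:ℝ)).mono' ((gmeas.comp (hmeas 0)).aestronglyMeasurable) ?_
      filter_upwards with ω
      simp only [Function.comp_apply, hgdef]
      split_ifs <;> norm_num
    have hident : ∀ i, IdentDistrib (g ∘ x i) (g ∘ x 0) P P := by
      intro i
      have h0 : IdentDistrib (x i) (x 0) P P :=
        ⟨(hmeas i).aemeasurable, (hmeas 0).aemeasurable, by rw [hid i, hid 0]⟩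
      exact h0.comp gmeas
    have hpind : Pairwise (Function.onFun (IndepFun · · P) (fun i => g ∘ x i)) :=
      fun i j hij => (hindep.indepFun hij).comp gmeas gmeas
    have hexp : ∫ ω, (g ∘ x 0) ω ∂P = F c := by
      rw [show ∫ ω, (g ∘ x 0) ω ∂P = ∫ t, g t ∂(Measure.map (x 0) P) from
        (integral_map (hmeas 0).aemeasurable gmeas.aestronglyMeasurable).symm, hid 0]
      have : ∀ t, g t = Set.indicator (Set.Iic c) (fun _ => (1:ℝ)) t := by
        intro t; simp [hgdef, Set.indicator_apply]
      rw [show (fun t => g t) = fun t => Set.indicator (Set.Iic c) (fun _ => (1:ℝ)) t from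
        funext this]
      rw [MeasureTheory.integral_indicator_const (1:ℝ) measurableSet_Iic]
      simp [hFdef, Measure.real]
    have := strong_law_ae_real (μ := P) (fun i => g ∘ x i) hint hpind hident
    rw [hexp] at this
    filter_upwards [this] with ω hω
    simpa [hYcomp, hgdef] using hω
  -- the measure of any nonempty open subinterval of (0,1) is positive
  have hμpos : ∀ a b : ℝ, 0 ≤ a → b ≤ 1 → a < b → 0 < μ (Set.Ioo a b) := by
    intro a b ha hb hab
    rw [hμ, withDensity_apply _ measurableSet_Ioo]
    by_contra h
    push_neg at h
    have h0 : ∫⁻ t in Set.Ioo a b, ENNReal.ofReal (f t) ∂volume = 0 := le_antisymm h bot_le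
    rw [lintegral_eq_zero_iff (hf.ennreal_ofReal)] at h0
    have hsub : Set.Ioo a b ⊆ Set.Ioo (0:ℝ) 1 := Set.Ioo_subset_Ioo ha hb
    have hpos' : ∀ᵐ t ∂(volume.restrict (Set.Ioo a b)), 0 < f t :=
      ae_restrict_of_ae_restrict_of_subset hsub hpos
    have : ∀ᵐ t ∂(volume.restrict (Set.Ioo a b)), False := by
      filter_upwards [h0, hpos'] with t h1 h2
      simp only [Pi.zero_apply, ENNReal.ofReal_eq_zero] at h1
      linarith
    rw [ae_iff] at this
    simp only [not_false_iff, Set.setOf_true] at this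
    rw [Measure.restrict_apply_univ] at this
    rw [Real.volume_Ioo] at this
    exact (ENNReal.ofReal_pos.2 (by linarith)).ne' this
  have hIicq : μ (Set.Iic q) ≠ ⊤ := measure_ne_top μ _
  -- F(q - ε) < p for all ε > 0
  have hlow : ∀ ε : ℝ, 0 < ε → F (q - ε) < p := by
    intro ε hε
    rcases le_or_gt (q - ε) 0 with h | h
    · have : μ (Set.Iic (q - ε)) = 0 := by
        have hsub : Set.Iic (q - ε) ⊆ (Set.Ioo (0:ℝ) 1)ᶜ := by
          intro t ht hmem
          exact absurd (lt_of_lt_of_le hmem.1 (le_trans ht h)) (lt_irrefl 0)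
        have : μ ((Set.Ioo (0:ℝ) 1)ᶜ) = 0 := by
          rw [measure_compl measurableSet_Ioo (measure_ne_top μ _), hsupp,
            measure_univ, tsub_self]
        exact le_antisymm (le_trans (measure_mono hsub) this.le) bot_le
      simp [hFdef, this, hp.1]
    · have hdecomp : μ (Set.Iic q) = μ (Set.Iic (q - ε)) + μ (Set.Ioc (q - ε) q) := by
        rw [← measure_union (Set.Iic_disjoint_Ioc le_rfl) measurableSet_Ioc,
          Set.Iic_union_Ioc_eq_Iic (by linarith)]
      have hposmid : 0 < μ (Set.Ioc (q - ε) q) :=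
        lt_of_lt_of_le (hμpos (q - ε) q h.le hq.2.le (by linarith))
          (measure_mono Set.Ioo_subset_Ioc_self)
      have hlt : μ (Set.Iic (q - ε)) < μ (Set.Iic q) := by
        rw [hdecomp]
        exact ENNReal.lt_add_right (ne_top_of_le_ne_top hIicq
          (by rw [hdecomp]; exact le_self_add)) hposmid.ne'
      have := (ENNReal.toReal_lt_toReal (measure_ne_top μ _) hIicq).2 hlt
      rw [hqF] at this
      exact this
  -- p < F(q + ε) for all ε > 0
  have hhigh : ∀ ε : ℝ, 0 < ε → p < F (q + ε) := by
    intro ε hε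
    rcases le_or_gt 1 (q + ε) with h | h
    · have h1 : (1:ENNReal) ≤ μ (Set.Iic (q + ε)) := by
        rw [← hsupp]
        exact measure_mono (fun t ht => le_trans ht.2.le h)
      have h2 : μ (Set.Iic (q + ε)) ≤ 1 := prob_le_one
      have : μ (Set.Iic (q + ε)) = 1 := le_antisymm h2 h1
      simp [hFdef, this, hp.2]
    · have hdecomp : μ (Set.Iic (q + ε)) = μ (Set.Iic q) + μ (Set.Ioc q (q + ε)) := by
        rw [← measure_union (Set.Iic_disjoint_Ioc le_rfl) measurableSet_Ioc,
          Set.Iic_union_Ioc_eq_Iic (by linarith)]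
      have hposmid : 0 < μ (Set.Ioc q (q + ε)) :=
        lt_of_lt_of_le (hμpos q (q + ε) hq.1.le h.le (by linarith))
          (measure_mono Set.Ioo_subset_Ioc_self)
      have hlt : μ (Set.Iic q) < μ (Set.Iic (q + ε)) := by
        rw [hdecomp]
        exact ENNReal.lt_add_right hIicq hposmid.ne'
      have := (ENNReal.toReal_lt_toReal hIicq (measure_ne_top μ _)).2 hlt
      rw [hqF] at this
      exact this
  -- key step: for every ε > 0, eventually |qhat n ω - q| ≤ ε, a.s.
  have key : ∀ ε : ℝ, 0 < ε → ∀ᵐ ω ∂P, ∀ᶠ n in atTop, |qhat n ω - q| ≤ ε := by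
    intro ε hε
    filter_upwards [slln (q - ε), slln (q + ε)] with ω h1 h2
    have e1 : ∀ᶠ n : ℕ in atTop,
        (∑ i ∈ Finset.range n, if x i ω ≤ q - ε then (1:ℝ) else 0) / n < p :=
      h1.eventually_lt_const (hlow ε hε)
    have e2 : ∀ᶠ n : ℕ in atTop,
        p < (∑ i ∈ Finset.range n, if x i ω ≤ q + ε then (1:ℝ) else 0) / n :=
      h2.eventually_const_lt (hhigh ε hε)
    filter_upwards [e1, e2, eventually_ge_atTop 1] with n hn1 hn2 hn
    obtain ⟨hq1, hq2⟩ := hqhat ω n hn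
    have hnpos : (0:ℝ) < n := by exact_mod_cast hn
    -- lower bound: q - ε < qhat n ω
    have hlb : q - ε < qhat n ω := by
      by_contra hcon
      push_neg at hcon
      have hsum : (∑ i ∈ Finset.range n, if x i ω ≤ qhat n ω then (1:ℝ) else 0)
          ≤ ∑ i ∈ Finset.range n, if x i ω ≤ q - ε then (1:ℝ) else 0 := by
        apply Finset.sum_le_sum
        intro i _
        split_ifs with ha hb
        · exact le_refl 1
        · exact absurd (le_trans ha hcon) hb
        · norm_num
        · exact le_refl 0
      have : p < p := lt_of_le_of_lt (le_trans hq2 (by gcongr)) hn1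
      exact lt_irrefl p this
    -- upper bound: qhat n ω ≤ q + ε
    have hub : qhat n ω ≤ q + ε := by
      by_contra hcon
      push_neg at hcon
      have hsum : (∑ i ∈ Finset.range n, if x i ω ≤ q + ε then (1:ℝ) else 0)
          ≤ ∑ i ∈ Finset.range n, if x i ω < qhat n ω then (1:ℝ) else 0 := by
        apply Finset.sum_le_sum
        intro i _
        split_ifs with ha hb
        · exact le_refl 1
        · exact absurd (lt_of_le_of_lt ha hcon) hb
        · norm_num
        · exact le_refl 0
      have : p < p := lt_of_lt_of_le hn2 (le_trans (by gcongr) hq1)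
      exact lt_irrefl p this
    rw [abs_le]
    constructor <;> linarith
  -- conclude: intersect over ε = 1/(k+1)
  have hall : ∀ᵐ ω ∂P, ∀ k : ℕ, ∀ᶠ n in atTop, |qhat n ω - q| ≤ 1 / (k + 1) :=
    ae_all_iff.2 fun k => key (1 / (k + 1)) (by positivity)
  filter_upwards [hall] with ω hω
  rw [Metric.tendsto_atTop]
  intro ε hε
  obtain ⟨k, hk⟩ := exists_nat_one_div_lt hε
  obtain ⟨N, hN⟩ := eventually_atTop.1 (hω k)
  exact ⟨N, fun n hn => lt_of_le_of_lt (by rw [Real.dist_eq]; exact hN n hn) hk⟩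
end
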